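/- arXiv:2605.28256 — 2 statements merged into one kernel-verified Lean document; each statement's English description precedes it below -/
import Mathlib

section
/- Let R be a commutative k-algebra, L a Lie–Rinehart algebra over R, and E an R-module. Define on the k-module E ⊕ Hom_R(L, E) the multiplication f · (s, σ) = (f s, f σ + s ⊗ d_V f), where (d_V f)(X) = ρ(X)(f). This multiplication makes E ⊕ Hom_R(L, E) into an R-module. -/
set_option maxRecDepth 40000
set_option maxHeartbeats 2000000


/-!
STATEMENT 3: For a Lie–Rinehart algebra L over a commutative k-algebra R with anchor
ρ : L → Der_k(R), and an R-module E, the multiplication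
  f · (s, σ) = (f s, f σ + s ⊗ d_V f),   where (d_V f)(X) = ρ(X)(f),
makes the k-module E ⊕ Hom_R(L, E) into an R-module (the first order V-jet module J¹_V(E)).
We exhibit the multiplication explicitly and assert all the R-module axioms for it.
-/

/-- The element `s ⊗ d_V f ∈ Hom_R(L, E)`, i.e. the map `X ↦ ρ(X)(f) • s`. -/
def sdV {k R L E : Type*} [CommRing k] [CommRing R] [Algebra k R]
    [LieRing L] [Module R L] [AddCommGroup E] [Module R E]
    (ρ : L →ₗ[R] Derivation k R R) (f : R) (s : E) : L →ₗ[R] E where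
  toFun X := ρ X f • s
  map_add' X Y := by simp [add_smul]
  map_smul' c X := by simp [smul_smul]

/-- The twisted multiplication on `J¹_V(E) = E ⊕ Hom_R(L,E)`:
`f · (s, σ) = (f s, f σ + s ⊗ d_V f)`. -/
def jsmul {k R L E : Type*} [CommRing k] [CommRing R] [Algebra k R]
    [LieRing L] [Module R L] [AddCommGroup E] [Module R E]
    (ρ : L →ₗ[R] Derivation k R R) (f : R) (p : E × (L →ₗ[R] E)) :
    E × (L →ₗ[R] E) :=
  (f • p.1, f • p.2 + sdV ρ f p.1)

/-- The twisted multiplication satisfies all the axioms of an R-module structure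
on `E ⊕ Hom_R(L, E)` (the underlying additive group being the product group). -/
theorem jet_module_axioms
    {k R L E : Type*} [CommRing k] [CommRing R] [Algebra k R]
    [LieRing L] [Module R L] [AddCommGroup E] [Module R E]
    (ρ : L →ₗ[R] Derivation k R R) :
    (∀ p : E × (L →ₗ[R] E), jsmul ρ 1 p = p) ∧
    (∀ (f g : R) (p : E × (L →ₗ[R] E)), jsmul ρ (f * g) p = jsmul ρ f (jsmul ρ g p)) ∧
    (∀ (f : R) (p q : E × (L →ₗ[R] E)), jsmul ρ f (p + q) = jsmul ρ f p + jsmul ρ f q) ∧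
    (∀ (f g : R) (p : E × (L →ₗ[R] E)), jsmul ρ (f + g) p = jsmul ρ f p + jsmul ρ g p) ∧
    (∀ p : E × (L →ₗ[R] E), jsmul ρ 0 p = 0) ∧
    (∀ f : R, jsmul ρ f (0 : E × (L →ₗ[R] E)) = 0) := by
  refine ⟨fun p => ?_, fun f g p => ?_, fun f p q => ?_, fun f g p => ?_,
    fun p => ?_, fun f => ?_⟩
  · refine Prod.ext ?_ (LinearMap.ext fun X => ?_)
    · exact one_smul R p.1
    · simp [jsmul, sdV]
  · refine Prod.ext ?_ (LinearMap.ext fun X => ?_)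
    · exact mul_smul f g p.1
    · show (f * g) • p.2 X + (ρ X) (f * g) • p.1 =
        f • (g • p.2 X + (ρ X) g • p.1) + (ρ X) f • (g • p.1)
      rw [Derivation.leibniz, mul_smul, smul_add, add_smul, smul_smul f ((ρ X) g),
        smul_smul ((ρ X) f) g, smul_eq_mul, smul_eq_mul, mul_comm g ((ρ X) f)]
      abel
  · refine Prod.ext ?_ (LinearMap.ext fun X => ?_)
    · exact smul_add f p.1 q.1
    · show f • (p.2 + q.2) X + (ρ X) f • (p.1 + q.1) =
        (f • p.2 X + (ρ X) f • p.1) + (f • q.2 X + (ρ X) f • q.1)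
      rw [LinearMap.add_apply, smul_add, smul_add]
      abel
  · refine Prod.ext ?_ (LinearMap.ext fun X => ?_)
    · exact add_smul f g p.1
    · show (f + g) • p.2 X + (ρ X) (f + g) • p.1 =
        (f • p.2 X + (ρ X) f • p.1) + (g • p.2 X + (ρ X) g • p.1)
      rw [add_smul, show (ρ X) (f + g) = (ρ X) f + (ρ X) g from map_add _ f g,
        add_smul]
      abel
  · refine Prod.ext ?_ (LinearMap.ext fun X => ?_)
    · exact zero_smul R p.1
    · show (0 : R) • p.2 X + (ρ X) 0 • p.1 = 0
      rw [map_zero]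
      simp
  · refine Prod.ext ?_ (LinearMap.ext fun X => ?_)
    · exact smul_zero f
    · show f • (0 : L →ₗ[R] E) X + (ρ X) f • (0 : E) = 0
      simp
end

section
/- If a vector bundle E on P¹ admits a holomorphic connection ∇ : E → E ⊗ Ω¹_{P¹} (a C-linear sheaf map with ∇(fs) = f∇s + s⊗df), then E is holomorphically trivial; equivalently, in the Grothendieck decomposition E ≅ ⊕ O(a_i), all a_i = 0. -/
/-!
STATEMENT 14: If a vector bundle E on ℙ¹ admits a holomorphic connection, then E is
holomorphically trivial; equivalently, in the Grothendieck decomposition E ≅ ⊕ O(a_i),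
all a_i = 0.

Model: E ≅ ⊕ O(a_i) (Grothendieck), trivialized on the two standard charts (coordinates
t and s = 1/t) with diagonal transition diag(t^{a_i}).  A holomorphic connection on E is a
pair of polynomial connection matrices A(t) (coefficient of dt, chart 0) and B(s)
(coefficient of ds, chart ∞) related on the overlap by the gauge transformation rule
  B(1/t)_{ij} · (−t⁻²) = t^{a_i − a_j} A(t)_{ij} − δ_{ij} a_j t⁻¹,
i.e. (cleared of denominators, in ℂ[t,t⁻¹]):
  B(1/t)_{ij} = −t² · t^{a_i − a_j} A(t)_{ij} + δ_{ij} a_j t.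
The conclusion is that all a_i = 0, i.e. E is trivial.
-/

open LaurentPolynomial

lemma toLaurent_neg_coeff (p : Polynomial ℂ) (n : ℤ) (hn : n < 0) :
    (Polynomial.toLaurent p).coeff n = 0 := by
  rw [LaurentPolynomial.coeff_toLaurent]
  refine Finsupp.mapDomain_notin_range _ _ ?_
  rintro ⟨m, rfl⟩
  exact absurd hn (by simp)

theorem bundle_with_connection_on_P1_is_trivial
    {r : ℕ} (a : Fin r → ℤ)
    (A B : Matrix (Fin r) (Fin r) (Polynomial ℂ))
    (hglue : ∀ i j, invert (Polynomial.toLaurent (B i j))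
      = -(T 2 * (T (a i - a j) * Polynomial.toLaurent (A i j)))
        + (if i = j then C ((a j : ℂ)) * T 1 else 0)) :
    ∀ i, a i = 0 := by
  intro i
  have h : (invert (Polynomial.toLaurent (B i i))).coeff 1
      = (-(T 2 * (T (a i - a i) * Polynomial.toLaurent (A i i)))
        + (C ((a i : ℂ)) * T 1) : LaurentPolynomial ℂ).coeff 1 := by
    rw [hglue i i, if_pos rfl]
  have hL : (invert (Polynomial.toLaurent (B i i))).coeff 1 = 0 := by
    rw [invert_apply]
    exact toLaurent_neg_coeff _ _ (by norm_num)
  have hT : ((T 2 * (T (a i - a i) * Polynomial.toLaurent (A i i)) : LaurentPolynomial ℂ)).coeff 1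
      = 0 := by
    rw [sub_self, T_zero, one_mul,
      show (T 2 : LaurentPolynomial ℂ) = AddMonoidAlgebra.single (2:ℤ) (1:ℂ) from rfl,
      AddMonoidAlgebra.coeff_single_mul_apply, toLaurent_neg_coeff _ _ (by norm_num), mul_zero]
  have hC : ((C ((a i : ℂ)) * T 1) : LaurentPolynomial ℂ).coeff 1 = (a i : ℂ) := by
    rw [show (T 1 : LaurentPolynomial ℂ) = AddMonoidAlgebra.single (1:ℤ) (1:ℂ) from rfl,
      AddMonoidAlgebra.coeff_mul_single_apply, mul_one, add_neg_cancel, ← single_eq_C,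
      AddMonoidAlgebra.coeff_single, Finsupp.single_eq_same]
  rw [hL, AddMonoidAlgebra.coeff_add, AddMonoidAlgebra.coeff_neg, Finsupp.add_apply, Finsupp.neg_apply, hT, hC, neg_zero, zero_add] at h
  exact_mod_cast h.symm
end
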